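/- For every integer n ≥ 1, L_{n,2} = C(3(n-1)n/2, 2) - 3(n-1)^2 = (3/8)(n-1)(n-2)(3n^2+3n-4). -/

import Mathlib

open Finset

/-- The three edges of the upward unit triangle with lower-left corner `p`. -/
def upTri (p : ℕ × ℕ) : Finset (Sym2 (ℕ × ℕ)) :=
  {s(p, (p.1 + 1, p.2)), s(p, (p.1, p.2 + 1)), s((p.1 + 1, p.2), (p.1, p.2 + 1))}

/-- The three edges of the downward unit triangle associated to `p`. -/
def downTri (p : ℕ × ℕ) : Finset (Sym2 (ℕ × ℕ)) :=
  {s((p.1 + 1, p.2), (p.1, p.2 + 1)), s((p.1 + 1, p.2), (p.1 + 1, p.2 + 1)),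
    s((p.1, p.2 + 1), (p.1 + 1, p.2 + 1))}

/-- The upward-pointing unit triangles of the triangular grid of side `n`. -/
def upTris (n : ℕ) : Finset (Finset (Sym2 (ℕ × ℕ))) :=
  ((Finset.range n ×ˢ Finset.range n).filter (fun p => p.1 + p.2 + 1 ≤ n)).image upTri

/-- The downward-pointing unit triangles of the triangular grid of side `n`. -/
def downTris (n : ℕ) : Finset (Finset (Sym2 (ℕ × ℕ))) :=
  ((Finset.range n ×ˢ Finset.range n).filter (fun p => p.1 + p.2 + 2 ≤ n)).image downTri

/-- All unit triangles (each given as its set of three edges). -/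
def unitTris (n : ℕ) : Finset (Finset (Sym2 (ℕ × ℕ))) := upTris n ∪ downTris n

/-- All edges of the triangular grid of side `n`. -/
def allEdges (n : ℕ) : Finset (Sym2 (ℕ × ℕ)) := (unitTris n).sup id

/-- The internal edges: edges belonging to two unit triangles. -/
def internalEdges (n : ℕ) : Finset (Sym2 (ℕ × ℕ)) :=
  (allEdges n).filter (fun e => 2 ≤ ((unitTris n).filter (fun t => e ∈ t)).card)

/-- A lozenge tiling: a set of internal edges, no two in a common unit triangle. -/
def IsLozengeTiling (n : ℕ) (S : Finset (Sym2 (ℕ × ℕ))) : Prop :=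
  S ⊆ internalEdges n ∧ ∀ t ∈ unitTris n, (t ∩ S).card ≤ 1

/-- `L n l`: the number of lozenge tilings of the side-`n` triangle with `l` lozenges. -/
def L (n l : ℕ) : ℕ :=
  (((internalEdges n).powersetCard l).filter
    (fun S => ∀ t ∈ unitTris n, (t ∩ S).card ≤ 1)).card

/-! ### Edge shapes -/

def eH (p : ℕ × ℕ) : Sym2 (ℕ × ℕ) := s(p, (p.1 + 1, p.2))
def eV (p : ℕ × ℕ) : Sym2 (ℕ × ℕ) := s(p, (p.1, p.2 + 1))
def eD (p : ℕ × ℕ) : Sym2 (ℕ × ℕ) := s((p.1 + 1, p.2), (p.1, p.2 + 1))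

lemma upTri_eq (p : ℕ × ℕ) : upTri p = {eH p, eV p, eD p} := rfl

lemma downTri_eq (p : ℕ × ℕ) :
    downTri p = {eD p, eV (p.1 + 1, p.2), eH (p.1, p.2 + 1)} := rfl

@[simp] lemma eH_eq_eH {p q : ℕ × ℕ} : eH p = eH q ↔ p = q := by
  simp only [eH, Sym2.eq_iff, Prod.ext_iff]; omega

@[simp] lemma eV_eq_eV {p q : ℕ × ℕ} : eV p = eV q ↔ p = q := by
  simp only [eV, Sym2.eq_iff, Prod.ext_iff]; omega

@[simp] lemma eD_eq_eD {p q : ℕ × ℕ} : eD p = eD q ↔ p = q := by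
  simp only [eD, Sym2.eq_iff, Prod.ext_iff]; omega

@[simp] lemma eH_ne_eV {p q : ℕ × ℕ} : eH p ≠ eV q := by
  simp only [eH, eV, ne_eq, Sym2.eq_iff, Prod.ext_iff]; omega

@[simp] lemma eH_ne_eD {p q : ℕ × ℕ} : eH p ≠ eD q := by
  simp only [eH, eD, ne_eq, Sym2.eq_iff, Prod.ext_iff]; omega

@[simp] lemma eV_ne_eD {p q : ℕ × ℕ} : eV p ≠ eD q := by
  simp only [eV, eD, ne_eq, Sym2.eq_iff, Prod.ext_iff]; omega

@[simp] lemma eV_ne_eH {p q : ℕ × ℕ} : eV p ≠ eH q := fun h => eH_ne_eV h.symm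
@[simp] lemma eD_ne_eH {p q : ℕ × ℕ} : eD p ≠ eH q := fun h => eH_ne_eD h.symm
@[simp] lemma eD_ne_eV {p q : ℕ × ℕ} : eD p ≠ eV q := fun h => eV_ne_eD h.symm

lemma mem_upTri {e : Sym2 (ℕ × ℕ)} {p : ℕ × ℕ} :
    e ∈ upTri p ↔ e = eH p ∨ e = eV p ∨ e = eD p := by
  rw [upTri_eq]; simp

lemma mem_downTri {e : Sym2 (ℕ × ℕ)} {p : ℕ × ℕ} :
    e ∈ downTri p ↔ e = eD p ∨ e = eV (p.1 + 1, p.2) ∨ e = eH (p.1, p.2 + 1) := by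
  rw [downTri_eq]; simp

lemma upTri_inj {p q : ℕ × ℕ} (h : upTri p = upTri q) : p = q := by
  have : eH p ∈ upTri q := h ▸ (mem_upTri.mpr (Or.inl rfl))
  rcases mem_upTri.mp this with h' | h' | h'
  · exact eH_eq_eH.mp h'
  · exact absurd h' eH_ne_eV
  · exact absurd h' eH_ne_eD

lemma downTri_inj {p q : ℕ × ℕ} (h : downTri p = downTri q) : p = q := by
  have : eD p ∈ downTri q := h ▸ (mem_downTri.mpr (Or.inl rfl))
  rcases mem_downTri.mp this with h' | h' | h'
  · exact eD_eq_eD.mp h'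
  · exact absurd h' eD_ne_eV
  · exact absurd h' eD_ne_eH

lemma upTri_ne_downTri (p q : ℕ × ℕ) : upTri p ≠ downTri q := by
  intro h
  have h1 : eH p ∈ downTri q := h ▸ (mem_upTri.mpr (Or.inl rfl))
  have h2 : eV p ∈ downTri q := h ▸ (mem_upTri.mpr (Or.inr (Or.inl rfl)))
  rcases mem_downTri.mp h1 with h' | h' | h'
  · exact absurd h' eH_ne_eD
  · exact absurd h' eH_ne_eV
  · rcases mem_downTri.mp h2 with h'' | h'' | h''
    · exact absurd h'' eV_ne_eD
    · have hA := eH_eq_eH.mp h'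
      have hB := eV_eq_eV.mp h''
      rw [hA] at hB
      simp [Prod.ext_iff] at hB
    · exact absurd h'' eV_ne_eH

lemma mem_unitTris {n : ℕ} {t : Finset (Sym2 (ℕ × ℕ))} :
    t ∈ unitTris n ↔ (∃ p : ℕ × ℕ, p.1 + p.2 + 1 ≤ n ∧ t = upTri p) ∨
      (∃ p : ℕ × ℕ, p.1 + p.2 + 2 ≤ n ∧ t = downTri p) := by
  simp only [unitTris, mem_union, upTris, downTris, mem_image, mem_filter, mem_product,
    mem_range]
  constructor
  · rintro (⟨p, ⟨⟨_, _⟩, hp⟩, rfl⟩ | ⟨p, ⟨⟨_, _⟩, hp⟩, rfl⟩)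
    · exact Or.inl ⟨p, hp, rfl⟩
    · exact Or.inr ⟨p, hp, rfl⟩
  · rintro (⟨p, hp, rfl⟩ | ⟨p, hp, rfl⟩)
    · exact Or.inl ⟨p, ⟨⟨by omega, by omega⟩, hp⟩, rfl⟩
    · exact Or.inr ⟨p, ⟨⟨by omega, by omega⟩, hp⟩, rfl⟩

lemma mem_internal_iff {n : ℕ} {e : Sym2 (ℕ × ℕ)} :
    e ∈ internalEdges n ↔
      ∃ t1 t2, t1 ∈ unitTris n ∧ t2 ∈ unitTris n ∧ e ∈ t1 ∧ e ∈ t2 ∧ t1 ≠ t2 := by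
  constructor
  · intro h
    obtain ⟨_, h2⟩ := mem_filter.mp h
    obtain ⟨t1, ht1, t2, ht2, hne⟩ := Finset.one_lt_card.mp h2
    obtain ⟨ht1u, ht1e⟩ := mem_filter.mp ht1
    obtain ⟨ht2u, ht2e⟩ := mem_filter.mp ht2
    exact ⟨t1, t2, ht1u, ht2u, ht1e, ht2e, hne⟩
  · rintro ⟨t1, t2, h1, h2, he1, he2, hne⟩
    refine mem_filter.mpr ⟨?_, ?_⟩
    · exact Finset.mem_sup.mpr ⟨t1, h1, he1⟩
    · exact Finset.one_lt_card.mpr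
        ⟨t1, mem_filter.mpr ⟨h1, he1⟩, t2, mem_filter.mpr ⟨h2, he2⟩, hne⟩
lemma eH_mem_upTri {p q : ℕ × ℕ} : eH p ∈ upTri q ↔ q = p := by
  rw [mem_upTri]; simp [eq_comm]

lemma eV_mem_upTri {p q : ℕ × ℕ} : eV p ∈ upTri q ↔ q = p := by
  rw [mem_upTri]; simp [eq_comm]

lemma eD_mem_upTri {p q : ℕ × ℕ} : eD p ∈ upTri q ↔ q = p := by
  rw [mem_upTri]; simp [eq_comm]

lemma eH_mem_downTri {p q : ℕ × ℕ} : eH p ∈ downTri q ↔ p = (q.1, q.2 + 1) := by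
  rw [mem_downTri]; simp

lemma eV_mem_downTri {p q : ℕ × ℕ} : eV p ∈ downTri q ↔ p = (q.1 + 1, q.2) := by
  rw [mem_downTri]; simp

lemma eD_mem_downTri {p q : ℕ × ℕ} : eD p ∈ downTri q ↔ q = p := by
  rw [mem_downTri]; simp [eq_comm]

lemma internal_eH {n : ℕ} {p : ℕ × ℕ} :
    eH p ∈ internalEdges n ↔ 1 ≤ p.2 ∧ p.1 + p.2 + 1 ≤ n := by
  rw [mem_internal_iff]
  constructor
  · rintro ⟨t1, t2, h1, h2, he1, he2, hne⟩
    have key : ∀ t, t ∈ unitTris n → eH p ∈ t →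
        t = upTri p ∨ (t = downTri (p.1, p.2 - 1) ∧ 1 ≤ p.2 ∧ p.1 + p.2 + 1 ≤ n) := by
      intro t ht het
      rcases mem_unitTris.mp ht with ⟨q, hq, rfl⟩ | ⟨q, hq, rfl⟩
      · left; rw [eH_mem_upTri.mp het]
      · right
        have hpq := eH_mem_downTri.mp het
        have h1 : p.1 = q.1 := by rw [hpq]
        have h2 : p.2 = q.2 + 1 := by rw [hpq]
        constructor
        · congr 1
          simp [Prod.ext_iff]; omega
        · omega
    rcases key t1 h1 he1 with k1 | k1
    · rcases key t2 h2 he2 with k2 | k2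
      · exact absurd (k1.trans k2.symm) hne
      · exact k2.2
    · exact k1.2
  · rintro ⟨h1, h2⟩
    refine ⟨upTri p, downTri (p.1, p.2 - 1),
      mem_unitTris.mpr (Or.inl ⟨p, h2, rfl⟩),
      mem_unitTris.mpr (Or.inr ⟨(p.1, p.2 - 1), by simp; omega, rfl⟩),
      eH_mem_upTri.mpr rfl,
      eH_mem_downTri.mpr (by simp [Prod.ext_iff]; omega),
      upTri_ne_downTri _ _⟩

lemma internal_eV {n : ℕ} {p : ℕ × ℕ} :
    eV p ∈ internalEdges n ↔ 1 ≤ p.1 ∧ p.1 + p.2 + 1 ≤ n := by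
  rw [mem_internal_iff]
  constructor
  · rintro ⟨t1, t2, h1, h2, he1, he2, hne⟩
    have key : ∀ t, t ∈ unitTris n → eV p ∈ t →
        t = upTri p ∨ (t = downTri (p.1 - 1, p.2) ∧ 1 ≤ p.1 ∧ p.1 + p.2 + 1 ≤ n) := by
      intro t ht het
      rcases mem_unitTris.mp ht with ⟨q, hq, rfl⟩ | ⟨q, hq, rfl⟩
      · left; rw [eV_mem_upTri.mp het]
      · right
        have hpq := eV_mem_downTri.mp het
        have h1 : p.1 = q.1 + 1 := by rw [hpq]
        have h2 : p.2 = q.2 := by rw [hpq]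
        constructor
        · congr 1
          simp [Prod.ext_iff]; omega
        · omega
    rcases key t1 h1 he1 with k1 | k1
    · rcases key t2 h2 he2 with k2 | k2
      · exact absurd (k1.trans k2.symm) hne
      · exact k2.2
    · exact k1.2
  · rintro ⟨h1, h2⟩
    refine ⟨upTri p, downTri (p.1 - 1, p.2),
      mem_unitTris.mpr (Or.inl ⟨p, h2, rfl⟩),
      mem_unitTris.mpr (Or.inr ⟨(p.1 - 1, p.2), by simp; omega, rfl⟩),
      eV_mem_upTri.mpr rfl,
      eV_mem_downTri.mpr (by simp [Prod.ext_iff]; omega),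
      upTri_ne_downTri _ _⟩

lemma internal_eD {n : ℕ} {p : ℕ × ℕ} :
    eD p ∈ internalEdges n ↔ p.1 + p.2 + 2 ≤ n := by
  rw [mem_internal_iff]
  constructor
  · rintro ⟨t1, t2, h1, h2, he1, he2, hne⟩
    have key : ∀ t, t ∈ unitTris n → eD p ∈ t →
        t = upTri p ∨ (t = downTri p ∧ p.1 + p.2 + 2 ≤ n) := by
      intro t ht het
      rcases mem_unitTris.mp ht with ⟨q, hq, rfl⟩ | ⟨q, hq, rfl⟩
      · left; rw [eD_mem_upTri.mp het]
      · right
        rw [eD_mem_downTri.mp het] at hq ⊢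
        exact ⟨rfl, hq⟩
    rcases key t1 h1 he1 with k1 | k1
    · rcases key t2 h2 he2 with k2 | k2
      · exact absurd (k1.trans k2.symm) hne
      · exact k2.2
    · exact k1.2
  · intro h2
    refine ⟨upTri p, downTri p,
      mem_unitTris.mpr (Or.inl ⟨p, by omega, rfl⟩),
      mem_unitTris.mpr (Or.inr ⟨p, h2, rfl⟩),
      eD_mem_upTri.mpr rfl,
      eD_mem_downTri.mpr rfl,
      upTri_ne_downTri _ _⟩

lemma internal_shape {n : ℕ} {e : Sym2 (ℕ × ℕ)} (h : e ∈ internalEdges n) :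
    ∃ p, e = eH p ∨ e = eV p ∨ e = eD p := by
  obtain ⟨t1, _, h1, _, he1, _, _⟩ := mem_internal_iff.mp h
  rcases mem_unitTris.mp h1 with ⟨q, _, rfl⟩ | ⟨q, _, rfl⟩
  · rcases mem_upTri.mp he1 with h' | h' | h'
    exacts [⟨q, Or.inl h'⟩, ⟨q, Or.inr (Or.inl h')⟩, ⟨q, Or.inr (Or.inr h')⟩]
  · rcases mem_downTri.mp he1 with h' | h' | h'
    exacts [⟨q, Or.inr (Or.inr h')⟩, ⟨(q.1 + 1, q.2), Or.inr (Or.inl h')⟩,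
      ⟨(q.1, q.2 + 1), Or.inl h'⟩]
def bu (m : ℕ) : Finset (ℕ × ℕ) := (range m).biUnion Finset.HasAntidiagonal.antidiagonal

lemma mem_bu {m : ℕ} {p : ℕ × ℕ} : p ∈ bu m ↔ p.1 + p.2 < m := by
  simp only [bu, Finset.mem_biUnion, Finset.HasAntidiagonal.mem_antidiagonal, mem_range]
  constructor
  · rintro ⟨k, hk, rfl⟩; omega
  · intro h; exact ⟨p.1 + p.2, h, rfl⟩

lemma card_bu (m : ℕ) : (bu m).card * 2 = m * (m + 1) := by
  rw [bu, card_biUnion]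
  · have : ∑ k ∈ range m, (Finset.HasAntidiagonal.antidiagonal k).card = ∑ k ∈ range m, (k + 1) := by
      apply Finset.sum_congr rfl
      intro k _
      exact Finset.Nat.card_antidiagonal k
    rw [this, Finset.sum_add_distrib, Finset.sum_const, card_range, smul_eq_mul, mul_one]
    cases m with
    | zero => rfl
    | succ k =>
      have h2 : (∑ i ∈ range (k + 1), i) * 2 = (k + 1) * k :=
        Finset.sum_range_id_mul_two (k + 1)
      nlinarith [h2]
  · intro k _ k' _ hkk'
    simp only [Finset.disjoint_left, Finset.HasAntidiagonal.mem_antidiagonal]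
    intro a h1 h2
    omega

lemma internal_decomp (n : ℕ) :
    internalEdges n =
      ((bu (n - 1)).image (fun q => eH (q.1, q.2 + 1)) ∪
        (bu (n - 1)).image (fun q => eV (q.1 + 1, q.2))) ∪
        (bu (n - 1)).image eD := by
  ext e
  simp only [mem_union, mem_image]
  constructor
  · intro h
    obtain ⟨p, hp | hp | hp⟩ := internal_shape h <;> subst hp
    · obtain ⟨h1, h2⟩ := internal_eH.mp h
      refine Or.inl (Or.inl ⟨(p.1, p.2 - 1), mem_bu.mpr (by simp; omega), ?_⟩)
      rw [eH_eq_eH]; simp [Prod.ext_iff]; omega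
    · obtain ⟨h1, h2⟩ := internal_eV.mp h
      refine Or.inl (Or.inr ⟨(p.1 - 1, p.2), mem_bu.mpr (by simp; omega), ?_⟩)
      rw [eV_eq_eV]; simp [Prod.ext_iff]; omega
    · have h2 := internal_eD.mp h
      exact Or.inr ⟨p, mem_bu.mpr (by omega), rfl⟩
  · rintro ((⟨q, hq, rfl⟩ | ⟨q, hq, rfl⟩) | ⟨q, hq, rfl⟩)
    · exact internal_eH.mpr (by rw [mem_bu] at hq; simp; omega)
    · exact internal_eV.mpr (by rw [mem_bu] at hq; simp; omega)
    · exact internal_eD.mpr (by rw [mem_bu] at hq; omega)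

lemma card_internal (n : ℕ) : (internalEdges n).card = 3 * (bu (n - 1)).card := by
  rw [internal_decomp n, card_union_of_disjoint, card_union_of_disjoint]
  · rw [Finset.card_image_of_injective, Finset.card_image_of_injective,
      Finset.card_image_of_injective]
    · ring
    · intro a b h; exact eD_eq_eD.mp h
    · intro a b h
      have h' := eV_eq_eV.mp h
      rw [Prod.ext_iff] at h' ⊢
      simp at h'
      omega
    · intro a b h
      have h' := eH_eq_eH.mp h
      rw [Prod.ext_iff] at h' ⊢
      simp at h'
      omega
  · simp only [Finset.disjoint_left, mem_image]
    rintro e ⟨q, _, rfl⟩ ⟨q', _, h⟩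
    exact eV_ne_eH h
  · simp only [Finset.disjoint_left, mem_image, mem_union]
    rintro e (⟨q, _, rfl⟩ | ⟨q, _, rfl⟩) ⟨q', _, h⟩
    · exact eD_ne_eH h
    · exact eD_ne_eV h
lemma pair_eq' {α : Type*} [DecidableEq α] {a b c d : α} :
    ({a, b} : Finset α) = {c, d} ↔ (a = c ∧ b = d) ∨ (a = d ∧ b = c) := by
  rw [← Finset.coe_inj]
  simp only [coe_insert, coe_singleton]
  exact Set.pair_eq_pair_iff

lemma pair_sub_triple {α : Type*} [DecidableEq α] {S : Finset α} {a b c : α}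
    (hsub : S ⊆ {a, b, c}) (hcard : S.card = 2)
    (hab : a ≠ b) (hac : a ≠ c) (hbc : b ≠ c) :
    S = {a, b} ∨ S = {a, c} ∨ S = {b, c} := by
  have htri : ∀ x ∈ S, x = a ∨ x = b ∨ x = c := by
    intro x hx; have := hsub hx; simpa using this
  by_cases ha : a ∈ S <;> by_cases hb : b ∈ S <;> by_cases hc : c ∈ S
  · exfalso
    have h3 : ({a, b, c} : Finset α) ⊆ S := by
      intro x hx; simp at hx; rcases hx with rfl | rfl | rfl <;> assumption
    have hle := Finset.card_le_card h3
    have hcc : ({a, b, c} : Finset α).card = 3 := by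
      rw [card_insert_of_notMem (by simp [hab, hac]),
        card_insert_of_notMem (by simp [hbc]), card_singleton]
    omega
  · left
    apply Finset.Subset.antisymm
    · intro x hx
      rcases htri x hx with rfl | rfl | rfl
      · simp
      · simp
      · exact absurd hx hc
    · intro x hx; simp at hx; rcases hx with rfl | rfl <;> assumption
  · right; left
    apply Finset.Subset.antisymm
    · intro x hx
      rcases htri x hx with rfl | rfl | rfl
      · simp
      · exact absurd hx hb
      · simp
    · intro x hx; simp at hx; rcases hx with rfl | rfl <;> assumption
  · exfalso
    have : S ⊆ {a} := by
      intro x hx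
      rcases htri x hx with rfl | rfl | rfl
      · simp
      · exact absurd hx hb
      · exact absurd hx hc
    have := Finset.card_le_card this
    simp at this; omega
  · right; right
    apply Finset.Subset.antisymm
    · intro x hx
      rcases htri x hx with rfl | rfl | rfl
      · exact absurd hx ha
      · simp
      · simp
    · intro x hx; simp at hx; rcases hx with rfl | rfl <;> assumption
  · exfalso
    have : S ⊆ {b} := by
      intro x hx
      rcases htri x hx with rfl | rfl | rfl
      · exact absurd hx ha
      · simp
      · exact absurd hx hc
    have := Finset.card_le_card this
    simp at this; omega
  · exfalso
    have : S ⊆ {c} := by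
      intro x hx
      rcases htri x hx with rfl | rfl | rfl
      · exact absurd hx ha
      · exact absurd hx hb
      · simp
    have := Finset.card_le_card this
    simp at this; omega
  · exfalso
    have hSe : S ⊆ (∅ : Finset α) := by
      intro x hx
      rcases htri x hx with rfl | rfl | rfl
      · exact absurd hx ha
      · exact absurd hx hb
      · exact absurd hx hc
    rw [Finset.subset_empty] at hSe
    rw [hSe] at hcard
    simp at hcard

/-- The bad 2-subsets: those meeting some unit triangle twice. -/
def badSets (n : ℕ) : Finset (Finset (Sym2 (ℕ × ℕ))) :=
  ((internalEdges n).powersetCard 2).filter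
    (fun S => ¬ ∀ t ∈ unitTris n, (t ∩ S).card ≤ 1)

lemma mem_badSets {n : ℕ} {S : Finset (Sym2 (ℕ × ℕ))} :
    S ∈ badSets n ↔
      S ⊆ internalEdges n ∧ S.card = 2 ∧ ∃ t ∈ unitTris n, S ⊆ t := by
  rw [badSets, mem_filter, Finset.mem_powersetCard]
  constructor
  · rintro ⟨⟨hsub, hcard⟩, hbad⟩
    push_neg at hbad
    obtain ⟨t, ht, hct⟩ := hbad
    refine ⟨hsub, hcard, t, ht, ?_⟩
    have h1 : t ∩ S ⊆ S := Finset.inter_subset_right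
    have h2 : S.card ≤ (t ∩ S).card := by omega
    have := Finset.eq_of_subset_of_card_le h1 h2
    rw [← this]
    exact Finset.inter_subset_left
  · rintro ⟨hsub, hcard, t, ht, hst⟩
    refine ⟨⟨hsub, hcard⟩, ?_⟩
    push_neg
    refine ⟨t, ht, ?_⟩
    rw [Finset.inter_eq_right.mpr hst, hcard]
    omega

lemma badSets_decomp (n : ℕ) :
    badSets n =
      (((bu (n - 2)).image (fun q => ({eH (q.1 + 1, q.2 + 1), eV (q.1 + 1, q.2 + 1)} :
            Finset (Sym2 (ℕ × ℕ)))) ∪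
        (bu (n - 2)).image (fun q => {eH (q.1, q.2 + 1), eD (q.1, q.2 + 1)})) ∪
        ((bu (n - 2)).image (fun q => {eV (q.1 + 1, q.2), eD (q.1 + 1, q.2)}) ∪
        (bu (n - 1)).image (fun q => {eD q, eV (q.1 + 1, q.2)}))) ∪
        ((bu (n - 1)).image (fun q => {eD q, eH (q.1, q.2 + 1)}) ∪
        (bu (n - 1)).image (fun q => {eV (q.1 + 1, q.2), eH (q.1, q.2 + 1)})) := by
  ext S
  simp only [mem_union, mem_image]
  rw [mem_badSets]
  constructor
  · rintro ⟨hsub, hcard, t, ht, hst⟩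
    rcases mem_unitTris.mp ht with ⟨p, hp, rfl⟩ | ⟨p, hp, rfl⟩
    · rw [upTri_eq] at hst
      rcases pair_sub_triple hst hcard eH_ne_eV eH_ne_eD eV_ne_eD with rfl | rfl | rfl
      · have m1 : eH p ∈ internalEdges n := hsub (by simp)
        have m2 : eV p ∈ internalEdges n := hsub (by simp)
        have h1 := internal_eH.mp m1
        have h2 := internal_eV.mp m2
        refine Or.inl (Or.inl (Or.inl ⟨(p.1 - 1, p.2 - 1), mem_bu.mpr (by simp; omega), ?_⟩))
        have hpt : ((p.1 - 1 : ℕ) + 1, (p.2 - 1 : ℕ) + 1) = p := by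
          rw [Prod.ext_iff]; constructor <;> simp <;> omega
        rw [hpt]
      · have m1 : eH p ∈ internalEdges n := hsub (by simp)
        have m2 : eD p ∈ internalEdges n := hsub (by simp)
        have h1 := internal_eH.mp m1
        have h2 := internal_eD.mp m2
        refine Or.inl (Or.inl (Or.inr ⟨(p.1, p.2 - 1), mem_bu.mpr (by simp; omega), ?_⟩))
        have hpt : ((p.1 : ℕ), (p.2 - 1 : ℕ) + 1) = p := by
          rw [Prod.ext_iff]; constructor <;> simp <;> omega
        rw [hpt]
      · have m1 : eV p ∈ internalEdges n := hsub (by simp)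
        have m2 : eD p ∈ internalEdges n := hsub (by simp)
        have h1 := internal_eV.mp m1
        have h2 := internal_eD.mp m2
        refine Or.inl (Or.inr (Or.inl ⟨(p.1 - 1, p.2), mem_bu.mpr (by simp; omega), ?_⟩))
        have hpt : ((p.1 - 1 : ℕ) + 1, (p.2 : ℕ)) = p := by
          rw [Prod.ext_iff]; constructor <;> simp <;> omega
        rw [hpt]
    · rw [downTri_eq] at hst
      rcases pair_sub_triple hst hcard eD_ne_eV eD_ne_eH eV_ne_eH with rfl | rfl | rfl
      · exact Or.inl (Or.inr (Or.inr ⟨p, mem_bu.mpr (by omega), rfl⟩))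
      · exact Or.inr (Or.inl ⟨p, mem_bu.mpr (by omega), rfl⟩)
      · exact Or.inr (Or.inr ⟨p, mem_bu.mpr (by omega), rfl⟩)
  · rintro (((⟨q, hq, rfl⟩ | ⟨q, hq, rfl⟩) | (⟨q, hq, rfl⟩ | ⟨q, hq, rfl⟩)) |
      (⟨q, hq, rfl⟩ | ⟨q, hq, rfl⟩)) <;> rw [mem_bu] at hq
    · refine ⟨?_, Finset.card_pair eH_ne_eV, upTri (q.1 + 1, q.2 + 1),
        mem_unitTris.mpr (Or.inl ⟨_, by simp; omega, rfl⟩), ?_⟩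
      · intro x hx; simp at hx
        rcases hx with rfl | rfl
        · exact internal_eH.mpr (by simp; omega)
        · exact internal_eV.mpr (by simp; omega)
      · intro x hx; simp at hx
        rcases hx with rfl | rfl
        · exact eH_mem_upTri.mpr rfl
        · exact eV_mem_upTri.mpr rfl
    · refine ⟨?_, Finset.card_pair eH_ne_eD, upTri (q.1, q.2 + 1),
        mem_unitTris.mpr (Or.inl ⟨_, by simp; omega, rfl⟩), ?_⟩
      · intro x hx; simp at hx
        rcases hx with rfl | rfl
        · exact internal_eH.mpr (by simp; omega)
        · exact internal_eD.mpr (by simp; omega)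
      · intro x hx; simp at hx
        rcases hx with rfl | rfl
        · exact eH_mem_upTri.mpr rfl
        · exact eD_mem_upTri.mpr rfl
    · refine ⟨?_, Finset.card_pair eV_ne_eD, upTri (q.1 + 1, q.2),
        mem_unitTris.mpr (Or.inl ⟨_, by simp; omega, rfl⟩), ?_⟩
      · intro x hx; simp at hx
        rcases hx with rfl | rfl
        · exact internal_eV.mpr (by simp; omega)
        · exact internal_eD.mpr (by simp; omega)
      · intro x hx; simp at hx
        rcases hx with rfl | rfl
        · exact eV_mem_upTri.mpr rfl
        · exact eD_mem_upTri.mpr rfl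
    · refine ⟨?_, Finset.card_pair eD_ne_eV, downTri q,
        mem_unitTris.mpr (Or.inr ⟨q, by omega, rfl⟩), ?_⟩
      · intro x hx; simp at hx
        rcases hx with rfl | rfl
        · exact internal_eD.mpr (by omega)
        · exact internal_eV.mpr (by simp; omega)
      · intro x hx; simp at hx
        rcases hx with rfl | rfl
        · exact eD_mem_downTri.mpr rfl
        · exact eV_mem_downTri.mpr rfl
    · refine ⟨?_, Finset.card_pair eD_ne_eH, downTri q,
        mem_unitTris.mpr (Or.inr ⟨q, by omega, rfl⟩), ?_⟩
      · intro x hx; simp at hx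
        rcases hx with rfl | rfl
        · exact internal_eD.mpr (by omega)
        · exact internal_eH.mpr (by simp; omega)
      · intro x hx; simp at hx
        rcases hx with rfl | rfl
        · exact eD_mem_downTri.mpr rfl
        · exact eH_mem_downTri.mpr rfl
    · refine ⟨?_, Finset.card_pair eV_ne_eH, downTri q,
        mem_unitTris.mpr (Or.inr ⟨q, by omega, rfl⟩), ?_⟩
      · intro x hx; simp at hx
        rcases hx with rfl | rfl
        · exact internal_eV.mpr (by simp; omega)
        · exact internal_eH.mpr (by simp; omega)
      · intro x hx; simp at hx
        rcases hx with rfl | rfl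
        · exact eV_mem_downTri.mpr rfl
        · exact eH_mem_downTri.mpr rfl
lemma card_badSets (n : ℕ) :
    (badSets n).card = 3 * (bu (n - 2)).card + 3 * (bu (n - 1)).card := by
  have d12 : Disjoint ((bu (n - 2)).image (fun q => ({eH (q.1 + 1, q.2 + 1), eV (q.1 + 1, q.2 + 1)} : Finset (Sym2 (ℕ × ℕ))))) ((bu (n - 2)).image (fun q => ({eH (q.1, q.2 + 1), eD (q.1, q.2 + 1)} : Finset (Sym2 (ℕ × ℕ))))) := by
    simp only [Finset.disjoint_left, mem_image]
    rintro T ⟨q, hq, rfl⟩ ⟨q', hq', hT⟩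
    simp [pair_eq', Prod.ext_iff] at hT
    all_goals omega
  have d13 : Disjoint ((bu (n - 2)).image (fun q => ({eH (q.1 + 1, q.2 + 1), eV (q.1 + 1, q.2 + 1)} : Finset (Sym2 (ℕ × ℕ))))) ((bu (n - 2)).image (fun q => ({eV (q.1 + 1, q.2), eD (q.1 + 1, q.2)} : Finset (Sym2 (ℕ × ℕ))))) := by
    simp only [Finset.disjoint_left, mem_image]
    rintro T ⟨q, hq, rfl⟩ ⟨q', hq', hT⟩
    simp [pair_eq', Prod.ext_iff] at hT
    all_goals omega
  have d14 : Disjoint ((bu (n - 2)).image (fun q => ({eH (q.1 + 1, q.2 + 1), eV (q.1 + 1, q.2 + 1)} : Finset (Sym2 (ℕ × ℕ))))) ((bu (n - 1)).image (fun q => ({eD q, eV (q.1 + 1, q.2)} : Finset (Sym2 (ℕ × ℕ))))) := by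
    simp only [Finset.disjoint_left, mem_image]
    rintro T ⟨q, hq, rfl⟩ ⟨q', hq', hT⟩
    simp [pair_eq', Prod.ext_iff] at hT
    all_goals omega
  have d15 : Disjoint ((bu (n - 2)).image (fun q => ({eH (q.1 + 1, q.2 + 1), eV (q.1 + 1, q.2 + 1)} : Finset (Sym2 (ℕ × ℕ))))) ((bu (n - 1)).image (fun q => ({eD q, eH (q.1, q.2 + 1)} : Finset (Sym2 (ℕ × ℕ))))) := by
    simp only [Finset.disjoint_left, mem_image]
    rintro T ⟨q, hq, rfl⟩ ⟨q', hq', hT⟩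
    simp [pair_eq', Prod.ext_iff] at hT
    all_goals omega
  have d16 : Disjoint ((bu (n - 2)).image (fun q => ({eH (q.1 + 1, q.2 + 1), eV (q.1 + 1, q.2 + 1)} : Finset (Sym2 (ℕ × ℕ))))) ((bu (n - 1)).image (fun q => ({eV (q.1 + 1, q.2), eH (q.1, q.2 + 1)} : Finset (Sym2 (ℕ × ℕ))))) := by
    simp only [Finset.disjoint_left, mem_image]
    rintro T ⟨q, hq, rfl⟩ ⟨q', hq', hT⟩
    simp [pair_eq', Prod.ext_iff] at hT
    all_goals omega
  have d23 : Disjoint ((bu (n - 2)).image (fun q => ({eH (q.1, q.2 + 1), eD (q.1, q.2 + 1)} : Finset (Sym2 (ℕ × ℕ))))) ((bu (n - 2)).image (fun q => ({eV (q.1 + 1, q.2), eD (q.1 + 1, q.2)} : Finset (Sym2 (ℕ × ℕ))))) := by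
    simp only [Finset.disjoint_left, mem_image]
    rintro T ⟨q, hq, rfl⟩ ⟨q', hq', hT⟩
    simp [pair_eq', Prod.ext_iff] at hT
    all_goals omega
  have d24 : Disjoint ((bu (n - 2)).image (fun q => ({eH (q.1, q.2 + 1), eD (q.1, q.2 + 1)} : Finset (Sym2 (ℕ × ℕ))))) ((bu (n - 1)).image (fun q => ({eD q, eV (q.1 + 1, q.2)} : Finset (Sym2 (ℕ × ℕ))))) := by
    simp only [Finset.disjoint_left, mem_image]
    rintro T ⟨q, hq, rfl⟩ ⟨q', hq', hT⟩
    simp [pair_eq', Prod.ext_iff] at hT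
    all_goals omega
  have d25 : Disjoint ((bu (n - 2)).image (fun q => ({eH (q.1, q.2 + 1), eD (q.1, q.2 + 1)} : Finset (Sym2 (ℕ × ℕ))))) ((bu (n - 1)).image (fun q => ({eD q, eH (q.1, q.2 + 1)} : Finset (Sym2 (ℕ × ℕ))))) := by
    simp only [Finset.disjoint_left, mem_image]
    rintro T ⟨q, hq, rfl⟩ ⟨q', hq', hT⟩
    simp [pair_eq', Prod.ext_iff] at hT
    all_goals omega
  have d26 : Disjoint ((bu (n - 2)).image (fun q => ({eH (q.1, q.2 + 1), eD (q.1, q.2 + 1)} : Finset (Sym2 (ℕ × ℕ))))) ((bu (n - 1)).image (fun q => ({eV (q.1 + 1, q.2), eH (q.1, q.2 + 1)} : Finset (Sym2 (ℕ × ℕ))))) := by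
    simp only [Finset.disjoint_left, mem_image]
    rintro T ⟨q, hq, rfl⟩ ⟨q', hq', hT⟩
    simp [pair_eq', Prod.ext_iff] at hT
    all_goals omega
  have d34 : Disjoint ((bu (n - 2)).image (fun q => ({eV (q.1 + 1, q.2), eD (q.1 + 1, q.2)} : Finset (Sym2 (ℕ × ℕ))))) ((bu (n - 1)).image (fun q => ({eD q, eV (q.1 + 1, q.2)} : Finset (Sym2 (ℕ × ℕ))))) := by
    simp only [Finset.disjoint_left, mem_image]
    rintro T ⟨q, hq, rfl⟩ ⟨q', hq', hT⟩
    simp [pair_eq', Prod.ext_iff] at hT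
    all_goals omega
  have d35 : Disjoint ((bu (n - 2)).image (fun q => ({eV (q.1 + 1, q.2), eD (q.1 + 1, q.2)} : Finset (Sym2 (ℕ × ℕ))))) ((bu (n - 1)).image (fun q => ({eD q, eH (q.1, q.2 + 1)} : Finset (Sym2 (ℕ × ℕ))))) := by
    simp only [Finset.disjoint_left, mem_image]
    rintro T ⟨q, hq, rfl⟩ ⟨q', hq', hT⟩
    simp [pair_eq', Prod.ext_iff] at hT
    all_goals omega
  have d36 : Disjoint ((bu (n - 2)).image (fun q => ({eV (q.1 + 1, q.2), eD (q.1 + 1, q.2)} : Finset (Sym2 (ℕ × ℕ))))) ((bu (n - 1)).image (fun q => ({eV (q.1 + 1, q.2), eH (q.1, q.2 + 1)} : Finset (Sym2 (ℕ × ℕ))))) := by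
    simp only [Finset.disjoint_left, mem_image]
    rintro T ⟨q, hq, rfl⟩ ⟨q', hq', hT⟩
    simp [pair_eq', Prod.ext_iff] at hT
    all_goals omega
  have d45 : Disjoint ((bu (n - 1)).image (fun q => ({eD q, eV (q.1 + 1, q.2)} : Finset (Sym2 (ℕ × ℕ))))) ((bu (n - 1)).image (fun q => ({eD q, eH (q.1, q.2 + 1)} : Finset (Sym2 (ℕ × ℕ))))) := by
    simp only [Finset.disjoint_left, mem_image]
    rintro T ⟨q, hq, rfl⟩ ⟨q', hq', hT⟩
    simp [pair_eq', Prod.ext_iff] at hT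
    all_goals omega
  have d46 : Disjoint ((bu (n - 1)).image (fun q => ({eD q, eV (q.1 + 1, q.2)} : Finset (Sym2 (ℕ × ℕ))))) ((bu (n - 1)).image (fun q => ({eV (q.1 + 1, q.2), eH (q.1, q.2 + 1)} : Finset (Sym2 (ℕ × ℕ))))) := by
    simp only [Finset.disjoint_left, mem_image]
    rintro T ⟨q, hq, rfl⟩ ⟨q', hq', hT⟩
    simp [pair_eq', Prod.ext_iff] at hT
    all_goals omega
  have d56 : Disjoint ((bu (n - 1)).image (fun q => ({eD q, eH (q.1, q.2 + 1)} : Finset (Sym2 (ℕ × ℕ))))) ((bu (n - 1)).image (fun q => ({eV (q.1 + 1, q.2), eH (q.1, q.2 + 1)} : Finset (Sym2 (ℕ × ℕ))))) := by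
    simp only [Finset.disjoint_left, mem_image]
    rintro T ⟨q, hq, rfl⟩ ⟨q', hq', hT⟩
    simp [pair_eq', Prod.ext_iff] at hT
    all_goals omega
  have i1 : Function.Injective (fun q : ℕ × ℕ => ({eH (q.1 + 1, q.2 + 1), eV (q.1 + 1, q.2 + 1)} : Finset (Sym2 (ℕ × ℕ)))) := by
    intro a b hT
    simp [pair_eq', Prod.ext_iff] at hT
    rw [Prod.ext_iff]
    omega
  have i2 : Function.Injective (fun q : ℕ × ℕ => ({eH (q.1, q.2 + 1), eD (q.1, q.2 + 1)} : Finset (Sym2 (ℕ × ℕ)))) := by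
    intro a b hT
    simp [pair_eq', Prod.ext_iff] at hT
    rw [Prod.ext_iff]
    omega
  have i3 : Function.Injective (fun q : ℕ × ℕ => ({eV (q.1 + 1, q.2), eD (q.1 + 1, q.2)} : Finset (Sym2 (ℕ × ℕ)))) := by
    intro a b hT
    simp [pair_eq', Prod.ext_iff] at hT
    rw [Prod.ext_iff]
    omega
  have i4 : Function.Injective (fun q : ℕ × ℕ => ({eD q, eV (q.1 + 1, q.2)} : Finset (Sym2 (ℕ × ℕ)))) := by
    intro a b hT
    simp [pair_eq', Prod.ext_iff] at hT
    rw [Prod.ext_iff]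
    omega
  have i5 : Function.Injective (fun q : ℕ × ℕ => ({eD q, eH (q.1, q.2 + 1)} : Finset (Sym2 (ℕ × ℕ)))) := by
    intro a b hT
    simp [pair_eq', Prod.ext_iff] at hT
    rw [Prod.ext_iff]
    omega
  have i6 : Function.Injective (fun q : ℕ × ℕ => ({eV (q.1 + 1, q.2), eH (q.1, q.2 + 1)} : Finset (Sym2 (ℕ × ℕ)))) := by
    intro a b hT
    simp [pair_eq', Prod.ext_iff] at hT
    rw [Prod.ext_iff]
    omega
  rw [badSets_decomp n,
    card_union_of_disjoint (Finset.disjoint_union_left.mpr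
      ⟨Finset.disjoint_union_left.mpr
        ⟨Finset.disjoint_union_right.mpr ⟨d15, d16⟩, Finset.disjoint_union_right.mpr ⟨d25, d26⟩⟩,
       Finset.disjoint_union_left.mpr
        ⟨Finset.disjoint_union_right.mpr ⟨d35, d36⟩, Finset.disjoint_union_right.mpr ⟨d45, d46⟩⟩⟩),
    card_union_of_disjoint (Finset.disjoint_union_left.mpr
      ⟨Finset.disjoint_union_right.mpr ⟨d13, d14⟩, Finset.disjoint_union_right.mpr ⟨d23, d24⟩⟩),
    card_union_of_disjoint d12, card_union_of_disjoint d34, card_union_of_disjoint d56,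
    Finset.card_image_of_injective _ i1, Finset.card_image_of_injective _ i2,
    Finset.card_image_of_injective _ i3, Finset.card_image_of_injective _ i4,
    Finset.card_image_of_injective _ i5, Finset.card_image_of_injective _ i6]
  ring
lemma L_plus_bad (n : ℕ) :
    L n 2 + (badSets n).card = ((internalEdges n).card).choose 2 := by
  rw [← Finset.card_powersetCard 2 (internalEdges n)]
  exact Finset.card_filter_add_card_filter_not _

/-- `L_{n,2} = C(3(n-1)n/2, 2) - 3(n-1)² = (3/8)(n-1)(n-2)(3n²+3n-4)` for `n ≥ 1`. -/
theorem L_two (n : ℕ) (hn : 1 ≤ n) :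
    (L n 2 : ℚ) = (Nat.choose (3 * (n - 1) * n / 2) 2 : ℚ) - 3 * ((n : ℚ) - 1) ^ 2 ∧
    (L n 2 : ℚ) =
      3 / 8 * ((n : ℚ) - 1) * ((n : ℚ) - 2) * (3 * (n : ℚ) ^ 2 + 3 * n - 4) := by
  have hE : (internalEdges n).card = 3 * (bu (n - 1)).card := card_internal n
  have hb1 : (bu (n - 1)).card * 2 = (n - 1) * n := by
    have h := card_bu (n - 1)
    rwa [show n - 1 + 1 = n by omega] at h
  have hb1Q : ((bu (n - 1)).card : ℚ) * 2 = ((n : ℚ) - 1) * n := by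
    have h2 : ((bu (n - 1)).card : ℚ) * 2 = (((n - 1 : ℕ) : ℚ)) * n := by
      exact_mod_cast hb1
    rwa [Nat.cast_sub hn] at h2
  have hb2Q : ((bu (n - 2)).card : ℚ) * 2 = ((n : ℚ) - 2) * ((n : ℚ) - 1) := by
    rcases le_or_gt 2 n with h2 | h2
    · have h := card_bu (n - 2)
      rw [show n - 2 + 1 = n - 1 by omega] at h
      have hc : ((bu (n - 2)).card : ℚ) * 2 = (((n - 2 : ℕ) : ℚ)) * (((n - 1 : ℕ) : ℚ)) := by
        exact_mod_cast h
      rwa [Nat.cast_sub h2, Nat.cast_sub hn] at hc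
    · have hn1 : n = 1 := by omega
      subst hn1
      norm_num [bu]
  have hEn : (internalEdges n).card * 2 = 3 * ((n - 1) * n) := by
    rw [hE, mul_assoc, hb1]
  have hEdiv : (internalEdges n).card = 3 * (n - 1) * n / 2 := by
    have h3 : 3 * (n - 1) * n = (internalEdges n).card * 2 := by
      rw [mul_assoc, ← hEn]
    rw [h3]
    exact (Nat.mul_div_cancel _ (by norm_num)).symm
  have hbadQ : ((badSets n).card : ℚ) = 3 * ((n : ℚ) - 1) ^ 2 := by
    have hc : ((badSets n).card : ℚ) =
        3 * ((bu (n - 2)).card : ℚ) + 3 * ((bu (n - 1)).card : ℚ) := by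
      exact_mod_cast card_badSets n
    rw [hc]
    linear_combination (3 / 2 : ℚ) * hb2Q + (3 / 2 : ℚ) * hb1Q
  have hLQ : (L n 2 : ℚ) =
      (Nat.choose (internalEdges n).card 2 : ℚ) - ((badSets n).card : ℚ) := by
    have h' : (L n 2 : ℚ) + ((badSets n).card : ℚ) =
        (Nat.choose (internalEdges n).card 2 : ℚ) := by
      exact_mod_cast L_plus_bad n
    linarith
  constructor
  · rw [hLQ, hbadQ, hEdiv]
  · have hEQ : ((internalEdges n).card : ℚ) * 2 = 3 * ((n : ℚ) - 1) * (n : ℚ) := by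
      have hc : ((internalEdges n).card : ℚ) * 2 = 3 * ((((n - 1) * n : ℕ)) : ℚ) := by
        exact_mod_cast hEn
      rw [hc]
      push_cast [Nat.cast_sub hn]
      ring
    rw [hLQ, hbadQ, Nat.cast_choose_two]
    have hE' : ((internalEdges n).card : ℚ) = 3 * ((n : ℚ) - 1) * (n : ℚ) / 2 := by
      linarith
    rw [hE']
    ring
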